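/- For every natural number n ≥ 1 and every x ∈ ℝ, det(J̃_n(x)ᵀ + J̃_n(x)) = U_n(x) - U_{n-1}(x), where U_k denotes the k-th Chebyshev polynomial of the second kind. -/

import Mathlib

open Real Matrix Polynomial

/-- The `n × n` upper bidiagonal matrix with diagonal entries `x`, except that the
`(n,n)` entry is `x - 1/2`, and `1` on the superdiagonal. -/
noncomputable def jordanBlockMod (n : ℕ) (x : ℝ) : Matrix (Fin n) (Fin n) ℝ :=
  Matrix.of fun i j =>
    if (j : ℕ) = (i : ℕ) then (if (i : ℕ) = n - 1 then x - 1 / 2 else x)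
    else if (j : ℕ) = (i : ℕ) + 1 then 1 else 0

noncomputable def Mtd (n : ℕ) (x : ℝ) : Matrix (Fin n) (Fin n) ℝ :=
  Matrix.of fun i j =>
    if (i : ℕ) = (j : ℕ) then (if (i : ℕ) = n - 1 then 2*x - 1 else 2*x)
    else if (i : ℕ) + 1 = j ∨ (j : ℕ) + 1 = i then 1 else 0

lemma sum_eq (n : ℕ) (x : ℝ) : (jordanBlockMod n x)ᵀ + jordanBlockMod n x = Mtd n x := by
  ext i j
  simp only [Matrix.add_apply, Matrix.transpose_apply, jordanBlockMod, Mtd, Matrix.of_apply]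
  have hi := i.isLt; have hj := j.isLt
  split_ifs <;> first | ring1 | (exfalso; omega)

lemma sub1 (n : ℕ) (x : ℝ) :
    (Mtd (n+2) x).submatrix Fin.succ Fin.succ = Mtd (n+1) x := by
  ext i j
  simp only [Mtd, Matrix.submatrix_apply, Matrix.of_apply, Fin.val_succ]
  have hi := i.isLt; have hj := j.isLt
  split_ifs <;> first | ring1 | (exfalso; omega)

lemma succAbove_one_succ (n : ℕ) (j : Fin n) :
    (((1 : Fin (n+2)).succAbove j.succ : Fin (n+2)) : ℕ) = (j : ℕ) + 2 := by
  rw [Fin.succAbove_of_le_castSucc]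
  · simp
  · rw [Fin.le_def]; simp

lemma succAbove_one_zero (n : ℕ) :
    (((1 : Fin (n+2)).succAbove 0 : Fin (n+2)) : ℕ) = 0 := by
  rw [Fin.succAbove_of_castSucc_lt]
  · simp
  · rw [Fin.lt_def]; simp


lemma sub2 (n : ℕ) (x : ℝ) :
    ((Mtd (n+2) x).submatrix Fin.succ (1 : Fin (n+2)).succAbove).submatrix
      Fin.succ Fin.succ = Mtd n x := by
  ext i j
  simp only [Matrix.submatrix_apply, Mtd, Matrix.of_apply, Fin.val_succ]
  rw [succAbove_one_succ]
  have hi := i.isLt; have hj := j.isLt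
  split_ifs <;> first | ring1 | (exfalso; omega)

lemma det_rec (n : ℕ) (x : ℝ) :
    (Mtd (n+2) x).det = 2*x * (Mtd (n+1) x).det - (Mtd n x).det := by
  rw [Matrix.det_succ_row_zero, Fin.sum_univ_succ, Fin.sum_univ_succ]
  have hz : ∀ j : Fin n, (Mtd (n+2) x) 0 j.succ.succ = 0 := by
    intro j
    simp only [Mtd, Matrix.of_apply, Fin.val_succ, Fin.val_zero]
    split_ifs <;> first | rfl | (exfalso; omega) | simp_all
  rw [Finset.sum_eq_zero (fun j _ => by rw [hz j]; ring)]
  have h00 : (Mtd (n+2) x) 0 0 = 2*x := by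
    simp only [Mtd, Matrix.of_apply, Fin.val_zero]
    split_ifs <;> first | rfl | (exfalso; omega)
  have h01 : (Mtd (n+2) x) 0 (Fin.succ 0) = 1 := by
    simp only [Mtd, Matrix.of_apply, Fin.val_zero, Fin.val_succ]
    norm_num
  rw [h00, h01, Fin.succAbove_zero, sub1]
  have hB : ((Mtd (n+2) x).submatrix Fin.succ (Fin.succ (0 : Fin (n+1))).succAbove).det
      = (Mtd n x).det := by
    have hcol : (Fin.succ (0 : Fin (n+1))).succAbove = (1 : Fin (n+2)).succAbove := by
      rw [Fin.succ_zero_eq_one]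
    rw [hcol, Matrix.det_succ_column_zero, Fin.sum_univ_succ]
    have hz2 : ∀ i : Fin n,
        ((Mtd (n+2) x).submatrix Fin.succ (1 : Fin (n+2)).succAbove) i.succ 0 = 0 := by
      intro i
      simp only [Matrix.submatrix_apply, Mtd, Matrix.of_apply, Fin.val_succ]
      rw [succAbove_one_zero, if_neg (by omega), if_neg (by omega)]
    rw [Finset.sum_eq_zero (fun i _ => by rw [hz2 i]; ring)]
    have hc0 : ((Mtd (n+2) x).submatrix Fin.succ (1 : Fin (n+2)).succAbove) 0 0 = 1 := by
      simp only [Matrix.submatrix_apply, Mtd, Matrix.of_apply, Fin.val_succ, Fin.val_zero]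
      rw [succAbove_one_zero]
      split_ifs <;> first | rfl | (exfalso; omega)
    rw [hc0, Fin.succAbove_zero, sub2]
    simp
  rw [hB]
  simp
  ring

lemma det_one (x : ℝ) : (Mtd 1 x).det = 2*x - 1 := by
  rw [Matrix.det_fin_one]
  simp [Mtd]

lemma det_two (x : ℝ) : (Mtd 2 x).det = 2*x*(2*x-1) - 1 := by
  rw [Matrix.det_fin_two]
  simp [Mtd]

lemma key (x : ℝ) (n : ℕ) : (Mtd (n+1) x).det =
    (Polynomial.Chebyshev.U ℝ ((n : ℤ)+1)).eval x
      - (Polynomial.Chebyshev.U ℝ (n : ℤ)).eval x := by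
  induction n using Nat.twoStepInduction with
  | zero =>
    rw [det_one]
    simp [Polynomial.Chebyshev.U_one, Polynomial.Chebyshev.U_zero]
  | one =>
    rw [det_two]
    have h2 : ((1 : ℕ) : ℤ) + 1 = 2 := by norm_num
    rw [h2, Polynomial.Chebyshev.U_two]
    simp [Polynomial.Chebyshev.U_one]
    ring
  | more m ih1 ih2 =>
    have h3 : m + 2 + 1 = (m + 1) + 2 := by ring
    have c1 : ((m + 2 : ℕ) : ℤ) + 1 = ((m:ℤ) + 1) + 2 := by push_cast; ring
    have c2 : ((m + 2 : ℕ) : ℤ) = ((m:ℤ)) + 2 := by push_cast; ring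
    rw [h3, det_rec, ih1, ih2, c1, c2,
        Polynomial.Chebyshev.U_add_two ℝ ((m:ℤ)+1), Polynomial.Chebyshev.U_add_two ℝ (m:ℤ)]
    push_cast
    simp only [Polynomial.eval_sub, Polynomial.eval_mul, Polynomial.eval_X,
      Polynomial.eval_ofNat]
    ring

theorem det_transpose_add_jordanBlockMod (n : ℕ) (hn : 1 ≤ n) (x : ℝ) :
    ((jordanBlockMod n x)ᵀ + jordanBlockMod n x).det =
      (Polynomial.Chebyshev.U ℝ (n : ℤ)).eval x
        - (Polynomial.Chebyshev.U ℝ ((n : ℤ) - 1)).eval x := by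
  obtain ⟨m, rfl⟩ := Nat.exists_eq_add_of_le' hn
  rw [sum_eq, key]
  have e1 : ((m:ℤ)+1) = ((m+1 : ℕ) : ℤ) := by push_cast; ring
  have e2 : (((m+1 : ℕ) : ℤ)) - 1 = (m:ℤ) := by push_cast; ring
  rw [e1, e2]
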